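/- Let (A, B, C) be a recollement of abelian categories admitting a ladder of l-height three (functors l² ⊣ l¹ ⊣ l⁰ with l⁰ fully faithful). Then l¹ : B ⥤ C preserves Gorenstein projective objects. -/

import Mathlib

open CategoryTheory CategoryTheory.Limits

universe v₁ v₂ v₃ u₁ u₂ u₃

/-- A recollement of abelian categories `(A, B, C)`: adjoint triples `(q, i, p)` and
`(l, e, r)` with `i`, `l`, `r` fully faithful and the essential image of `i` equal to
the kernel of `e`. -/
structure AbRecollement (A : Type u₁) (B : Type u₂) (C : Type u₃)
    [Category.{v₁} A] [Category.{v₂} B] [Category.{v₃} C]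
    [Abelian A] [Abelian B] [Abelian C] where
  i : A ⥤ B
  e : B ⥤ C
  q : B ⥤ A
  p : B ⥤ A
  l : C ⥤ B
  r : C ⥤ B
  adj_qi : q ⊣ i
  adj_ip : i ⊣ p
  adj_le : l ⊣ e
  adj_er : e ⊣ r
  i_full : i.Full
  i_faithful : i.Faithful
  l_full : l.Full
  l_faithful : l.Faithful
  r_full : r.Full
  r_faithful : r.Faithful
  essImage_i_eq_ker_e : ∀ X : B, i.essImage X ↔ Limits.IsZero (e.obj X)

universe v u

/-- An object `X` of an abelian category is **Gorenstein projective** if it is the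
cokernel of a differential in a totally acyclic complex of projectives, i.e. an acyclic
complex `P•` of projectives such that `Hom(P•, Q)` is acyclic for every projective `Q`. -/
def IsGorensteinProjective {A : Type u} [Category.{v} A] [Abelian A] (X : A) : Prop :=
  ∃ P : CochainComplex A ℤ,
    (∀ n, Projective (P.X n)) ∧
    (∀ n, P.ExactAt n) ∧
    (∀ (Q : A), Projective Q → ∀ n,
      (((preadditiveYoneda.obj Q).mapHomologicalComplex _).obj P.op).ExactAt n) ∧
    Nonempty (X ≅ Limits.cokernel (P.d (-1) 0))

/-- An object `X` of an abelian category is **Gorenstein injective** if it is the kernel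
of a differential in a totally acyclic complex of injectives, i.e. an acyclic complex
`I•` of injectives such that `Hom(E, I•)` is acyclic for every injective `E`. -/
def IsGorensteinInjective {A : Type u} [Category.{v} A] [Abelian A] (X : A) : Prop :=
  ∃ I : CochainComplex A ℤ,
    (∀ n, Injective (I.X n)) ∧
    (∀ n, I.ExactAt n) ∧
    (∀ (E : A), Injective E → ∀ n,
      (((preadditiveCoyoneda.obj (Opposite.op E)).mapHomologicalComplex _).obj I).ExactAt n) ∧
    Nonempty (X ≅ Limits.kernel (I.d 0 1))

/-- An exact functor preserves exactness of homological complexes. -/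
lemma map_exactAt_aux {B : Type u₂} {C : Type u₃} [Category.{v₂} B] [Category.{v₃} C]
    [Abelian B] [Abelian C] (F : B ⥤ C) [F.Additive]
    [PreservesFiniteLimits F] [PreservesFiniteColimits F]
    {ι : Type} {c : ComplexShape ι} (K : HomologicalComplex B c) (n : ι)
    (h : K.ExactAt n) : ((F.mapHomologicalComplex c).obj K).ExactAt n := by
  rw [HomologicalComplex.exactAt_iff] at h ⊢
  have h' := h.map F
  exact ShortComplex.exact_of_iso
    (ShortComplex.isoMk (Iso.refl _) (Iso.refl _) (Iso.refl _)
      (by exact (Category.id_comp _).trans (Category.comp_id _).symm)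
      (by exact (Category.id_comp _).trans (Category.comp_id _).symm)) h'

/-- Let `(A, B, C)` be a recollement of abelian categories admitting a
ladder of `l`-height three (functors `l² ⊣ l¹ ⊣ l⁰` with `l⁰ = l` fully faithful).
Then `l¹ : B ⥤ C` preserves Gorenstein projective objects. -/
theorem ladder_l_height_three_l1_preserves_gorensteinProjective
    {A : Type u₁} {B : Type u₂} {C : Type u₃}
    [Category.{v₁} A] [Category.{v₂} B] [Category.{v₃} C]
    [Abelian A] [Abelian B] [Abelian C]
    [EnoughProjectives B] [EnoughProjectives C]
    (R : AbRecollement A B C)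
    (l₁ : B ⥤ C) (l₂ : C ⥤ B)
    (adj₂₁ : l₂ ⊣ l₁) (adj₁₀ : l₁ ⊣ R.l) :
    ∀ X : B, IsGorensteinProjective X → IsGorensteinProjective (l₁.obj X) := by
  intro X hX
  obtain ⟨P, hproj, hex, htot, ⟨e⟩⟩ := hX
  -- `l₁` is exact
  haveI : l₁.IsLeftAdjoint := adj₁₀.isLeftAdjoint
  haveI : PreservesColimitsOfSize.{v₂, v₂} l₁ := adj₁₀.leftAdjoint_preservesColimits
  haveI : PreservesLimitsOfSize.{v₂, v₂} l₁ := adj₂₁.rightAdjoint_preservesLimits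
  haveI : PreservesFiniteColimits l₁ :=
    PreservesColimitsOfSize.preservesFiniteColimits l₁
  haveI : PreservesFiniteLimits l₁ :=
    PreservesLimitsOfSize.preservesFiniteLimits l₁
  haveI : l₁.Additive := Functor.additive_of_preserves_binary_products l₁
  -- `R.l` is exact
  haveI : R.l.IsLeftAdjoint := R.adj_le.isLeftAdjoint
  haveI : PreservesColimitsOfSize.{v₃, v₃} R.l := R.adj_le.leftAdjoint_preservesColimits
  haveI : PreservesLimitsOfSize.{v₃, v₃} R.l := adj₁₀.rightAdjoint_preservesLimits
  haveI : PreservesFiniteLimits R.l :=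
    PreservesLimitsOfSize.preservesFiniteLimits R.l
  haveI : R.l.Additive := Functor.additive_of_preserves_binary_products R.l
  -- `R.e` preserves epis (it is a left adjoint), so `R.l` preserves projectives
  haveI : R.e.IsLeftAdjoint := R.adj_er.isLeftAdjoint
  refine ⟨(l₁.mapHomologicalComplex _).obj P, ?_, ?_, ?_, ?_⟩
  · intro n
    exact adj₁₀.map_projective _ (hproj n)
  · intro n
    exact map_exactAt_aux l₁ P n (hex n)
  · intro Q hQ n
    haveI := hQ
    have hlQ : Projective (R.l.obj Q) := R.adj_le.map_projective _ hQ
    have h := htot (R.l.obj Q) hlQ n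
    rw [HomologicalComplex.exactAt_iff, ShortComplex.ab_exact_iff] at h ⊢
    intro x₂ hx₂
    -- translate along the adjunction `l₁ ⊣ R.l`
    obtain ⟨y, hy⟩ := h (adj₁₀.homEquiv _ _ x₂) (by
      have this1 : l₁.map (P.d ((ComplexShape.up ℤ).symm.next n) n) ≫ x₂ = 0 := hx₂
      have this2 : P.d ((ComplexShape.up ℤ).symm.next n) n ≫
          (adj₁₀.homEquiv (P.X n) Q) x₂ = 0 := by
        exact (adj₁₀.homEquiv_naturality_left _ _).symm.trans
          ((congrArg (adj₁₀.homEquiv (P.X ((ComplexShape.up ℤ).symm.next n)) Q) this1).trans (by simp [Adjunction.homEquiv_apply] :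
            (adj₁₀.homEquiv (P.X ((ComplexShape.up ℤ).symm.next n)) Q) 0 = 0))
      exact this2)
    refine ⟨(adj₁₀.homEquiv _ _).symm y, (adj₁₀.homEquiv _ _).injective ?_⟩
    have this1 : P.d n ((ComplexShape.up ℤ).symm.prev n) ≫ y =
        (adj₁₀.homEquiv (P.X n) Q) x₂ := hy
    have this2 : (adj₁₀.homEquiv (P.X n) Q)
        (l₁.map (P.d n ((ComplexShape.up ℤ).symm.prev n)) ≫
          ((adj₁₀.homEquiv (P.X ((ComplexShape.up ℤ).symm.prev n)) Q).symm y)) =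
        (adj₁₀.homEquiv (P.X n) Q) x₂ := by
      rw [Adjunction.homEquiv_naturality_left]
      exact (congrArg (P.d n ((ComplexShape.up ℤ).symm.prev n) ≫ ·)
        ((adj₁₀.homEquiv _ _).apply_symm_apply y)).trans this1
    exact this2
  · exact ⟨l₁.mapIso e ≪≫ PreservesCokernel.iso l₁ (P.d (-1) 0)⟩
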